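/- Consider the DNP-game value computation on a finite directed graph: define V₀ to be the set of Min-sinks, and inductively V_k to be the set of nodes not in V_{<k} = V₀ ∪ ⋯ ∪ V_{k-1} such that either (the node is a Max node with an outgoing edge into V_{<k}) or (the node is a Min node, not a sink, all of whose outgoing edges lead into V_{<k}). Then for every k ∈ {0,…,n-1}, V_k = {v : δ(v) = λ^k}, where δ is the unique solution of the DNP-game equations with discount λ ∈ (0,1). -/
import Mathlib


/-- `δ : V → ℝ` solves the optimality equations of the discounted normal play
game on the directed graph `E` with Max-nodes `isMax` and discount `lam`:
`δ(s) = -1` on Max-sinks, `δ(s) = 1` on Min-sinks,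
`δ(a) = λ · max_{(a,b) ∈ E} δ(b)` on non-sink Max nodes and
`δ(a) = λ · min_{(a,b) ∈ E} δ(b)` on non-sink Min nodes. -/
def DNPsol {V : Type*} (E : V → V → Prop) (isMax : V → Prop) (lam : ℝ)
    (δ : V → ℝ) : Prop :=
  (∀ a, isMax a → (∀ b, ¬E a b) → δ a = -1) ∧
  (∀ a, ¬isMax a → (∀ b, ¬E a b) → δ a = 1) ∧
  (∀ a, isMax a → (∃ b, E a b) →
    ∃ b, E a b ∧ δ a = lam * δ b ∧ ∀ c, E a c → δ c ≤ δ b) ∧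
  (∀ a, ¬isMax a → (∃ b, E a b) →
    ∃ b, E a b ∧ δ a = lam * δ b ∧ ∀ c, E a c → δ b ≤ δ c)

/-- `Vless E isMax k` is the set `V_{<k} = V₀ ∪ ⋯ ∪ V_{k-1}` of the inductive
computation: `V₀` is the set of Min-sinks, and for `k ≥ 1`, `V_k` consists of
the nodes outside `V_{<k}` which are either Max nodes with an outgoing edge
into `V_{<k}`, or non-sink Min nodes all of whose outgoing edges lead into
`V_{<k}`. -/
def Vless {V : Type*} (E : V → V → Prop) (isMax : V → Prop) : ℕ → Set V
  | 0 => ∅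
  | k + 1 =>
    Vless E isMax k ∪
      if k = 0 then {v | ¬isMax v ∧ ∀ b, ¬E v b}
      else {v | v ∉ Vless E isMax k ∧
        ((isMax v ∧ ∃ b, E v b ∧ b ∈ Vless E isMax k) ∨
         (¬isMax v ∧ (∃ b, E v b) ∧ ∀ b, E v b → b ∈ Vless E isMax k))}

section Aux
variable {V : Type*} (E : V → V → Prop) (isMax : V → Prop)

lemma Vless_subset_succ (k : ℕ) : Vless E isMax k ⊆ Vless E isMax (k+1) := by
  rw [Vless]
  exact Set.subset_union_left

lemma Vless_mono {j k : ℕ} (h : j ≤ k) : Vless E isMax j ⊆ Vless E isMax k := by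
  induction h with
  | refl => exact subset_rfl
  | step _ ih => exact ih.trans (Vless_subset_succ E isMax _)

lemma exists_level {k : ℕ} {v : V} (h : v ∈ Vless E isMax k) :
    ∃ j, j < k ∧ v ∈ Vless E isMax (j+1) ∧ v ∉ Vless E isMax j := by
  induction k with
  | zero => simp [Vless] at h
  | succ k ih =>
    by_cases hk : v ∈ Vless E isMax k
    · obtain ⟨j, hj, h1, h2⟩ := ih hk
      exact ⟨j, Nat.lt_succ_of_lt hj, h1, h2⟩
    · exact ⟨k, Nat.lt_succ_self k, h, hk⟩

lemma mem_Vless_succ {m : ℕ} (hm : m ≠ 0) {v : V} (hv : v ∉ Vless E isMax m)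
    (h : (isMax v ∧ ∃ b, E v b ∧ b ∈ Vless E isMax m) ∨
         (¬isMax v ∧ (∃ b, E v b) ∧ ∀ b, E v b → b ∈ Vless E isMax m)) :
    v ∈ Vless E isMax (m+1) := by
  rw [Vless, if_neg hm]
  exact Or.inr ⟨hv, h⟩

variable [Fintype V] {lam : ℝ} (hlam0 : 0 < lam) (hlam1 : lam < 1)
  {δ : V → ℝ} (hδ : DNPsol E isMax lam δ)

include hlam0 hlam1 hδ

lemma delta_le_one (v : V) : δ v ≤ 1 := by
  by_contra hv
  push_neg at hv
  obtain ⟨h1, h2, h3, h4⟩ := hδ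
  obtain ⟨w, -, hw⟩ := Finset.exists_max_image Finset.univ δ ⟨v, Finset.mem_univ v⟩
  have hw1 : 1 < δ w := lt_of_lt_of_le hv (hw v (Finset.mem_univ v))
  by_cases hs : ∃ b, E w b
  · by_cases hm : isMax w
    · obtain ⟨b, hb, heq, -⟩ := h3 w hm hs
      have hb' : lam * δ b ≤ lam * δ w :=
        mul_le_mul_of_nonneg_left (hw b (Finset.mem_univ b)) hlam0.le
      nlinarith
    · obtain ⟨b, hb, heq, -⟩ := h4 w hm hs
      have hb' : lam * δ b ≤ lam * δ w :=
        mul_le_mul_of_nonneg_left (hw b (Finset.mem_univ b)) hlam0.le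
      nlinarith
  · push_neg at hs
    by_cases hm : isMax w
    · have := h1 w hm hs; linarith
    · have := h2 w hm hs; linarith

lemma delta_le_pow : ∀ k, ∀ v, v ∉ Vless E isMax k → δ v ≤ lam ^ k := by
  intro k
  induction k with
  | zero =>
    intro v _
    simpa using delta_le_one E isMax hlam0 hlam1 hδ v
  | succ k ih =>
    intro v hv
    obtain ⟨h1, h2, h3, h4⟩ := hδ
    rw [Vless, Set.mem_union, not_or] at hv
    obtain ⟨hvk, hvs⟩ := hv
    have hpow : (0:ℝ) < lam ^ (k+1) := pow_pos hlam0 _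
    rcases eq_or_ne k 0 with rfl | hk0
    · rw [if_pos rfl] at hvs
      simp only [Set.mem_setOf_eq, not_and, not_forall, not_not] at hvs
      by_cases hm : isMax v
      · by_cases hs : ∃ b, E v b
        · obtain ⟨b, hb, heq, -⟩ := h3 v hm hs
          have := delta_le_one E isMax hlam0 hlam1 ⟨h1,h2,h3,h4⟩ b
          rw [heq]
          calc lam * δ b ≤ lam * 1 := mul_le_mul_of_nonneg_left this hlam0.le
            _ = lam ^ (0+1) := by ring
        · push_neg at hs
          rw [h1 v hm hs]; linarith
      · by_cases hs : ∃ b, E v b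
        · obtain ⟨b, hb, heq, -⟩ := h4 v hm hs
          have := delta_le_one E isMax hlam0 hlam1 ⟨h1,h2,h3,h4⟩ b
          rw [heq]
          calc lam * δ b ≤ lam * 1 := mul_le_mul_of_nonneg_left this hlam0.le
            _ = lam ^ (0+1) := by ring
        · push_neg at hs
          obtain ⟨b, hb⟩ := hvs hm
          exact absurd hb (hs b)
    · rw [if_neg hk0] at hvs
      simp only [Set.mem_setOf_eq] at hvs
      have hvs' : ¬((isMax v ∧ ∃ b, E v b ∧ b ∈ Vless E isMax k) ∨
          (¬isMax v ∧ (∃ b, E v b) ∧ ∀ b, E v b → b ∈ Vless E isMax k)) :=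
        fun h => hvs ⟨hvk, h⟩
      by_cases hm : isMax v
      · by_cases hs : ∃ b, E v b
        · obtain ⟨b, hb, heq, -⟩ := h3 v hm hs
          have hbk : b ∉ Vless E isMax k := by
            intro hbV
            exact hvs' (Or.inl ⟨hm, b, hb, hbV⟩)
          have := ih b hbk
          rw [heq, pow_succ']
          exact mul_le_mul_of_nonneg_left this hlam0.le
        · push_neg at hs
          rw [h1 v hm hs]; linarith
      · by_cases hs : ∃ b, E v b
        · obtain ⟨b, hb, heq, hmin⟩ := h4 v hm hs
          have : ¬ ∀ c, E v c → c ∈ Vless E isMax k := by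
            intro hall
            exact hvs' (Or.inr ⟨hm, hs, hall⟩)
          push_neg at this
          obtain ⟨c, hc, hcV⟩ := this
          have hc' : δ c ≤ lam ^ k := ih c hcV
          have : δ b ≤ lam ^ k := le_trans (hmin c hc) hc'
          rw [heq, pow_succ']
          exact mul_le_mul_of_nonneg_left this hlam0.le
        · push_neg at hs
          have : v ∈ Vless E isMax k := by
            have h1' : v ∈ Vless E isMax 1 := by
              rw [Vless, if_pos rfl]
              exact Or.inr ⟨hm, hs⟩
            exact Vless_mono E isMax (by omega) h1'
          exact absurd this hvk

lemma delta_eq_pow (k : ℕ) :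
    ∀ v, v ∈ Vless E isMax (k+1) → v ∉ Vless E isMax k → δ v = lam ^ k := by
  induction k using Nat.strong_induction_on with
  | _ k ih =>
  intro v hv1 hv0
  obtain ⟨h1, h2, h3, h4⟩ := hδ
  cases k with
  | zero =>
    rw [Vless, if_pos rfl] at hv1
    rcases hv1 with hv1 | hv1
    · simp [Vless] at hv1
    · obtain ⟨hm, hs⟩ := hv1
      rw [h2 v hm hs, pow_zero]
  | succ k =>
    rw [Vless, Set.mem_union, if_neg (Nat.succ_ne_zero k)] at hv1
    rcases hv1 with hv1 | hv1
    · exact absurd hv1 hv0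
    obtain ⟨-, hcase⟩ := hv1
    have hvk : v ∉ Vless E isMax k := fun h => hv0 (Vless_subset_succ E isMax k h)
    rcases hcase with ⟨hm, b₀, hb₀E, hb₀V⟩ | ⟨hm, hs, hall⟩
    · -- Max case
      have hsucc : ∀ c, E v c → c ∈ Vless E isMax (k+1) → δ c = lam ^ k := by
        intro c hc hcV
        obtain ⟨j, hj, hc1, hc0⟩ := exists_level E isMax hcV
        have hjk : j = k := by
          by_contra hne
          have hjlt : j + 1 ≤ k := by omega
          have : v ∈ Vless E isMax (j+1+1) :=
            mem_Vless_succ E isMax (Nat.succ_ne_zero j)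
              (fun h => hv0 (Vless_mono E isMax (by omega) h))
              (Or.inl ⟨hm, c, hc, hc1⟩)
          exact hv0 (Vless_mono E isMax (by omega) this)
        subst hjk
        exact ih j (Nat.lt_succ_self j) c hc1 hc0
      obtain ⟨b, hbE, heq, hmax⟩ := h3 v hm ⟨b₀, hb₀E⟩
      have hb₀ : δ b₀ = lam ^ k := hsucc b₀ hb₀E hb₀V
      have hble : δ b ≤ lam ^ k := by
        by_cases hbV : b ∈ Vless E isMax (k+1)
        · exact le_of_eq (hsucc b hbE hbV)
        · have := delta_le_pow E isMax hlam0 hlam1 ⟨h1,h2,h3,h4⟩ (k+1) b hbV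
          calc δ b ≤ lam ^ (k+1) := this
            _ ≤ lam ^ k := pow_le_pow_of_le_one hlam0.le hlam1.le (Nat.le_succ k)
      have hbge : lam ^ k ≤ δ b := hb₀ ▸ hmax b₀ hb₀E
      have : δ b = lam ^ k := le_antisymm hble hbge
      rw [heq, this, pow_succ']
    · -- Min case
      obtain ⟨b, hbE, heq, hmin⟩ := h4 v hm hs
      have hge : ∀ c, E v c → lam ^ k ≤ δ c := by
        intro c hc
        obtain ⟨j, hj, hc1, hc0⟩ := exists_level E isMax (hall c hc)
        rw [ih j hj c hc1 hc0]
        exact pow_le_pow_of_le_one hlam0.le hlam1.le (by omega)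
      have hex : ∃ c, E v c ∧ c ∉ Vless E isMax k := by
        by_contra hco
        push_neg at hco
        rcases eq_or_ne k 0 with rfl | hk0
        · obtain ⟨b₁, hb₁⟩ := hs
          have := hco b₁ hb₁
          simp [Vless] at this
        · exact hv0 (mem_Vless_succ E isMax hk0 hvk (Or.inr ⟨hm, hs, hco⟩))
      obtain ⟨c, hcE, hcV⟩ := hex
      have hcval : δ c = lam ^ k := ih k (Nat.lt_succ_self k) c (hall c hcE) hcV
      have hble : δ b ≤ lam ^ k := hcval ▸ hmin c hcE
      have : δ b = lam ^ k := le_antisymm hble (hge b hbE)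
      rw [heq, this, pow_succ']

end Aux

/-- For every `k ∈ {0,…,n-1}`, the set `V_k = V_{<k+1} \ V_{<k}` of the
inductive computation equals `{v | δ(v) = λ^k}`, where `δ` is the solution of
the DNP-game equations with discount `λ ∈ (0,1)`. -/
theorem stmt19 {V : Type*} [Fintype V] (E : V → V → Prop) (isMax : V → Prop)
    (lam : ℝ) (hlam0 : 0 < lam) (hlam1 : lam < 1)
    (δ : V → ℝ) (hδ : DNPsol E isMax lam δ) :
    ∀ k, k ≤ Fintype.card V - 1 →
      Vless E isMax (k + 1) \ Vless E isMax k = {v : V | δ v = lam ^ k} := by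
  intro k _
  ext v
  simp only [Set.mem_diff, Set.mem_setOf_eq]
  constructor
  · rintro ⟨h1, h0⟩
    exact delta_eq_pow E isMax hlam0 hlam1 hδ k v h1 h0
  · intro hv
    have hanti : ∀ i j : ℕ, i < j → lam ^ j < lam ^ i := fun i j h =>
      pow_lt_pow_right_of_lt_one₀ hlam0 hlam1 h
    refine ⟨?_, ?_⟩
    · by_contra h
      have := delta_le_pow E isMax hlam0 hlam1 hδ (k+1) v h
      rw [hv] at this
      exact absurd this (not_le.mpr (hanti k (k+1) (Nat.lt_succ_self k)))
    · intro h
      obtain ⟨j, hj, h1, h0⟩ := exists_level E isMax h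
      have hval := delta_eq_pow E isMax hlam0 hlam1 hδ j v h1 h0
      rw [hv] at hval
      exact absurd hval (ne_of_lt (hanti j k hj))
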